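/- Let r ≥ 1 be an integer. If A ⊆ G is a round subset of the elementary abelian 2-group G of rank r with |A| > 2^(r-2) + 3, then the matching number of the graph Γ(A) is not equal to 2. -/

import Mathlib

open Pointwise

/-- `urep A` is the set `D(A)` of elements of the group having exactly one representation,
up to the order of summands, as a sum of two elements of `A`. -/
def urep {G : Type*} [AddCommGroup G] (A : Set G) : Set G :=
  {d | ∃ a₁ ∈ A, ∃ a₂ ∈ A, a₁ + a₂ = d ∧
    ∀ b₁ ∈ A, ∀ b₂ ∈ A, b₁ + b₂ = d → (b₁ = a₁ ∧ b₂ = a₂) ∨ (b₁ = a₂ ∧ b₂ = a₁)}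

/-- `gam A` is the unique representation graph `Γ(A)`: vertices are elements of `A`, and
distinct `a₁, a₂ ∈ A` are adjacent iff `a₁ + a₂ ∈ D(A)` (elements outside `A` are isolated). -/
def gam {G : Type*} [AddCommGroup G] (A : Set G) : SimpleGraph G :=
  SimpleGraph.fromRel (fun x y => x ∈ A ∧ y ∈ A ∧ x + y ∈ urep A)

namespace Stmt18Aux

/-! ### char-two helpers -/

section CharTwo

variable {G : Type*} [AddCommGroup G]

lemma swap_sum (h2 : ∀ x : G, x + x = 0) {x y z w : G} (h : x + y = z + w) :
    x + z = w + y := by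
  have e1 : (x + y) + (y + z) = (x + z) + (y + y) := by abel
  have e2 : (z + w) + (y + z) = (w + y) + (z + z) := by abel
  have : (x + y) + (y + z) = (z + w) + (y + z) := by rw [h]
  rw [e1, e2, h2, h2, add_zero, add_zero] at this
  exact this

lemma eq_add_of_add_eq (h2 : ∀ x : G, x + x = 0) {a b c : G} (h : a + b = c) :
    b = a + c := by
  rw [← h, ← add_assoc, h2, zero_add]

lemma eq_of_add_eq_zero'' (h2 : ∀ x : G, x + x = 0) {a b : G} (h : a + b = 0) :
    b = a := by
  have := eq_add_of_add_eq h2 h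
  rwa [add_zero] at this

end CharTwo

/-! ### urep and gam helpers -/

section Urep

variable {G : Type*} [AddCommGroup G] {A : Set G}

lemma urep_unique {d x y z w : G} (hd : d ∈ urep A) (hx : x ∈ A) (hy : y ∈ A)
    (hz : z ∈ A) (hw : w ∈ A) (hxy : x + y = d) (hzw : z + w = d) :
    (z = x ∧ w = y) ∨ (z = y ∧ w = x) := by
  obtain ⟨a₁, ha₁, a₂, ha₂, hsum, huniq⟩ := hd
  rcases huniq x hx y hy hxy with ⟨rfl, rfl⟩ | ⟨rfl, rfl⟩ <;>
    rcases huniq z hz w hw hzw with ⟨h1, h2⟩ | ⟨h1, h2⟩ <;> tauto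

lemma gam_adj {x y : G} : (gam A).Adj x y ↔ x ≠ y ∧ x ∈ A ∧ y ∈ A ∧ x + y ∈ urep A := by
  unfold gam
  rw [SimpleGraph.fromRel_adj]
  constructor
  · rintro ⟨hne, ⟨h1, h2', h3⟩ | ⟨h1, h2', h3⟩⟩
    · exact ⟨hne, h1, h2', h3⟩
    · exact ⟨hne, h2', h1, by rwa [add_comm]⟩
  · rintro ⟨hne, h1, h2', h3⟩
    exact ⟨hne, Or.inl ⟨h1, h2', h3⟩⟩

end Urep

/-! ### cardinality of level sets of a `ZMod 2`-valued homomorphism -/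

lemma level_card {H : Type} [AddCommGroup H] [Fintype H] (h2 : ∀ x : H, x + x = 0)
    (φ : H →+ ZMod 2) (hφ : ∃ x, φ x = 1) (c : ZMod 2) :
    2 * {x : H | φ x = c}.ncard = Fintype.card H := by
  obtain ⟨x₁, hx₁⟩ := hφ
  have himg : (fun a => a + x₁) '' {x : H | φ x = c} = {x : H | φ x = c + 1} := by
    ext y
    constructor
    · rintro ⟨a, ha, rfl⟩
      have ha' : φ a = c := ha
      simp only [Set.mem_setOf_eq, map_add, hx₁, ha']
    · intro hy
      have hy' : φ y = c + 1 := hy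
      refine ⟨y + x₁, ?_, by show y + x₁ + x₁ = y; rw [add_assoc, h2, add_zero]⟩
      have : φ (y + x₁) = (c + 1) + 1 := by rw [map_add, hx₁, hy']
      have hc : (c + 1) + 1 = c := by
        have : ∀ z : ZMod 2, z + 1 + 1 = z := by decide
        exact this c
      simpa [hc] using this
  have hcard : {x : H | φ x = c}.ncard = {x : H | φ x = c + 1}.ncard := by
    rw [← himg, Set.ncard_image_of_injective _ (add_left_injective x₁)]
  have hunion : {x : H | φ x = c} ∪ {x : H | φ x = c + 1} = Set.univ := by
    ext x
    simp only [Set.mem_union, Set.mem_setOf_eq, Set.mem_univ, iff_true]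
    have : ∀ z d : ZMod 2, z = d ∨ z = d + 1 := by decide
    exact this _ _
  have hdisj : Disjoint {x : H | φ x = c} {x : H | φ x = c + 1} := by
    rw [Set.disjoint_left]
    intro x hh1 hh2
    have hx1 : φ x = c := hh1
    have hx2 : φ x = c + 1 := hh2
    have hcc : ∀ z : ZMod 2, z ≠ z + 1 := by decide
    exact hcc c (hx1.symm.trans hx2)
  have hcc := Set.ncard_union_eq hdisj (Set.toFinite _) (Set.toFinite _)
  rw [hunion, Set.ncard_univ, Nat.card_eq_fintype_card] at hcc
  omega


/-! ### The core additive lemma -/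

theorem core :
    ∀ (N : ℕ) (H : Type) [AddCommGroup H] [Fintype H],
      (∀ x : H, x + x = 0) → Fintype.card H = N →
      ∀ U V : Set H, U.Nonempty → V.Nonempty → (0:H) ∉ U → (0:H) ∉ V →
      (∀ x, x ∈ U → x ∈ V → False) →
      (∀ u ∈ U, ∀ v ∈ V, u + v ∉ U ∧ u + v ∉ V) →
      2 * (U.ncard + V.ncard) ≤ N := by
  intro N
  induction N using Nat.strong_induction_on with
  | _ N ih =>
  intro H _ _ h2 hN U V hUne hVne h0U h0V hUV havoid
  classical
  letI : Module (ZMod 2) H := AddCommGroup.zmodModule (n := 2)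
    (by intro x; rw [two_nsmul]; exact h2 x)
  have z2 : ∀ z : ZMod 2, z = 0 ∨ z = 1 := by decide
  -- sub-configuration inside the kernel of a functional
  have subcall : ∀ (f : Module.Dual (ZMod 2) H) (X Y : Set H),
      (∀ x ∈ X, f x = 0) → (∀ y ∈ Y, f y = 0) →
      X.Nonempty → Y.Nonempty → (0:H) ∉ X → (0:H) ∉ Y →
      (∀ x, x ∈ X → x ∈ Y → False) →
      (∀ u ∈ X, ∀ v ∈ Y, u + v ∉ X ∧ u + v ∉ Y) →
      (∃ x : H, f x = 1) →
      4 * (X.ncard + Y.ncard) ≤ N := by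
    intro f X Y hX0 hY0 hXne hYne h0X h0Y hXY havd hf1
    set K := LinearMap.ker f with hK
    letI : Fintype ↥K := Fintype.ofFinite _
    have hkcardset : 2 * ({x : H | f x = 0}).ncard = N := by
      rw [← hN]
      exact level_card h2 f.toAddMonoidHom hf1 0
    have hkcard : Fintype.card ↥K = ({x : H | f x = 0}).ncard := by
      rw [← Nat.card_eq_fintype_card, ← Nat.card_coe_set_eq]
      exact Nat.card_congr (Equiv.subtypeEquivRight (by
        intro x
        simp [hK, LinearMap.mem_ker]))
    have h0mem : (0:H) ∈ {x : H | f x = 0} := by simp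
    have hpos : 0 < ({x : H | f x = 0}).ncard :=
      (Set.ncard_pos (Set.toFinite _)).mpr ⟨0, h0mem⟩
    have hlt : Fintype.card ↥K < N := by omega
    set X' : Set ↥K := {x : ↥K | (x : H) ∈ X} with hX'
    set Y' : Set ↥K := {y : ↥K | (y : H) ∈ Y} with hY'
    have hmemKX : ∀ x ∈ X, x ∈ K := fun x hx => LinearMap.mem_ker.mpr (hX0 x hx)
    have hmemKY : ∀ y ∈ Y, y ∈ K := fun y hy => LinearMap.mem_ker.mpr (hY0 y hy)
    have hXcard : X'.ncard = X.ncard := by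
      rw [← Set.ncard_image_of_injective X' Subtype.val_injective]
      congr 1
      ext y
      constructor
      · rintro ⟨x, hx, rfl⟩; exact hx
      · intro hy; exact ⟨⟨y, hmemKX y hy⟩, hy, rfl⟩
    have hYcard : Y'.ncard = Y.ncard := by
      rw [← Set.ncard_image_of_injective Y' Subtype.val_injective]
      congr 1
      ext y
      constructor
      · rintro ⟨x, hx, rfl⟩; exact hx
      · intro hy; exact ⟨⟨y, hmemKY y hy⟩, hy, rfl⟩
    obtain ⟨x₀, hx₀⟩ := hXne
    obtain ⟨y₀, hy₀⟩ := hYne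
    have hsub := ih (Fintype.card ↥K) hlt ↥K (fun x => Subtype.ext (h2 x)) rfl X' Y'
      ⟨⟨x₀, hmemKX x₀ hx₀⟩, hx₀⟩
      ⟨⟨y₀, hmemKY y₀ hy₀⟩, hy₀⟩
      (by intro h0; exact h0X (by simpa [hX'] using h0))
      (by intro h0; exact h0Y (by simpa [hY'] using h0))
      (fun x hx hy => hXY _ hx hy)
      (by
        rintro ⟨u, hu⟩ hu' ⟨v, hv⟩ hv'
        constructor
        · intro hmem
          exact (havd u hu' v hv').1 (by simpa [hX'] using hmem)
        · intro hmem
          exact (havd u hu' v hv').2 (by simpa [hY'] using hmem))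
    omega
  by_cases hsplit : ∀ f : Module.Dual (ZMod 2) H, (∃ x : H, f x = 1) →
      (∃ u ∈ U, f u = 0) ∧ (∃ u ∈ U, f u = 1) ∧ (∃ v ∈ V, f v = 0) ∧ (∃ v ∈ V, f v = 1)
  · -- averaging case
    obtain ⟨s₀, hs₀U⟩ := hUne
    have hs₀ne : s₀ ≠ 0 := fun h => h0U (h ▸ hs₀U)
    have F1 : ∀ s : H, s ≠ 0 → ∃ f : Module.Dual (ZMod 2) H, f s = 1 := by
      intro s hs
      set b := Module.finBasis (ZMod 2) H with hb
      have hnot : ¬ ∀ i, b.coord i s = 0 := by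
        rw [Module.Basis.forall_coord_eq_zero_iff]
        exact hs
      push_neg at hnot
      obtain ⟨i, hi⟩ := hnot
      refine ⟨b.coord i, ?_⟩
      rcases z2 (b.coord i s) with h | h
      · exact absurd h hi
      · exact h
    set b := Module.finBasis (ZMod 2) H with hb
    set e := b.constr (R := ZMod 2) (M := H) (M' := ZMod 2) (ZMod 2) with he
    letI : Fintype (Module.Dual (ZMod 2) H) := Fintype.ofEquiv _ e.toEquiv
    have hcardΦ : Fintype.card (Module.Dual (ZMod 2) H) = N := by
      have hcard1 : Fintype.card (Fin (Module.finrank (ZMod 2) H) → ZMod 2)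
          = Fintype.card (Module.Dual (ZMod 2) H) := Fintype.card_congr e.toEquiv
      have hcard2 : Fintype.card H
          = Fintype.card (Fin (Module.finrank (ZMod 2) H) → ZMod 2) :=
        Fintype.card_congr b.equivFun.toEquiv
      omega
    set SS : Set H := U ∪ V with hSS
    set Sfin : Finset H := SS.toFinite.toFinset with hSfin
    set Ffin : Finset (Module.Dual (ZMod 2) H) := Finset.univ.erase 0 with hFfin
    have h2Φ : ∀ g : Module.Dual (ZMod 2) H, g + g = 0 := by
      intro g; ext x
      simp only [LinearMap.add_apply, LinearMap.zero_apply]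
      have : ∀ z : ZMod 2, z + z = 0 := by decide
      exact this _
    have hpers : ∀ s ∈ Sfin, 2 * ((Ffin.filter (fun g => g s = 0)).card + 1) = N := by
      intro s hs
      have hsS : s ∈ SS := (Set.Finite.mem_toFinset _).mp hs
      have hsne : s ≠ 0 := by
        rintro rfl
        rcases hsS with h | h
        · exact h0U h
        · exact h0V h
      set E : Module.Dual (ZMod 2) H →+ ZMod 2 :=
        AddMonoidHom.mk' (fun g => g s) (fun g g' => rfl) with hE
      have hE1 : ∃ g, E g = 1 := F1 s hsne
      have hlevel := level_card h2Φ E hE1 0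
      rw [hcardΦ] at hlevel
      have hset : {g : Module.Dual (ZMod 2) H | E g = 0}
          = ↑(Finset.univ.filter (fun g : Module.Dual (ZMod 2) H => g s = 0)) := by
        ext g
        simp [hE]
      have hcount : ({g : Module.Dual (ZMod 2) H | E g = 0}).ncard
          = (Finset.univ.filter (fun g : Module.Dual (ZMod 2) H => g s = 0)).card := by
        rw [hset, Set.ncard_coe_finset]
      have hzero_mem : (0 : Module.Dual (ZMod 2) H)
          ∈ Finset.univ.filter (fun g : Module.Dual (ZMod 2) H => g s = 0) := by simp
      have herase : Ffin.filter (fun g => g s = 0)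
          = (Finset.univ.filter (fun g : Module.Dual (ZMod 2) H => g s = 0)).erase 0 := by
        rw [hFfin, Finset.filter_erase]
      have hcard_erase := Finset.card_erase_of_mem hzero_mem
      have hposf : 1 ≤ (Finset.univ.filter
          (fun g : Module.Dual (ZMod 2) H => g s = 0)).card :=
        Finset.card_pos.mpr ⟨0, hzero_mem⟩
      rw [herase, hcard_erase]
      omega
    have hperf : ∀ g ∈ Ffin, 4 * (Sfin.filter (fun s => g s = 0)).card ≤ N := by
      intro g hg
      have hgne : g ≠ 0 := (Finset.mem_erase.mp hg).1
      have hg1 : ∃ x : H, g x = 1 := by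
        by_contra hcon
        push_neg at hcon
        apply hgne
        ext x
        simp only [LinearMap.zero_apply]
        rcases z2 (g x) with h | h
        · exact h
        · exact absurd h (hcon x)
      obtain ⟨hu0, hu1, hv0, hv1⟩ := hsplit g hg1
      set U₀ : Set H := {x ∈ U | g x = 0} with hU₀
      set V₀ : Set H := {x ∈ V | g x = 0} with hV₀
      obtain ⟨u₀, hu₀U, hu₀0⟩ := hu0
      obtain ⟨v₀, hv₀V, hv₀0⟩ := hv0
      have hsc := subcall g U₀ V₀ (fun x hx => hx.2) (fun x hx => hx.2)
        ⟨u₀, hu₀U, hu₀0⟩ ⟨v₀, hv₀V, hv₀0⟩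
        (fun h0 => h0U h0.1) (fun h0 => h0V h0.1)
        (fun x hx hy => hUV x hx.1 hy.1)
        (fun u hu v hv => ⟨fun hc => (havoid u hu.1 v hv.1).1 hc.1,
          fun hc => (havoid u hu.1 v hv.1).2 hc.1⟩)
        hg1
      have hfil : (Sfin.filter (fun s => g s = 0)).card = U₀.ncard + V₀.ncard := by
        have hUV₀ : Disjoint U₀ V₀ :=
          Set.disjoint_left.mpr (fun {x} hx hy => hUV x hx.1 hy.1)
        have hun : U₀ ∪ V₀ = {x ∈ SS | g x = 0} := by
          rw [hSS]
          ext x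
          constructor
          · rintro (⟨hx, h⟩ | ⟨hx, h⟩)
            · exact ⟨Or.inl hx, h⟩
            · exact ⟨Or.inr hx, h⟩
          · rintro ⟨hx | hx, h⟩
            · exact Or.inl ⟨hx, h⟩
            · exact Or.inr ⟨hx, h⟩
        have hcup := Set.ncard_union_eq hUV₀ (Set.toFinite _) (Set.toFinite _)
        rw [hun] at hcup
        have hcoe : ({x ∈ SS | g x = 0} : Set H) = ↑(Sfin.filter (fun s => g s = 0)) := by
          ext x
          constructor
          · rintro ⟨hx, h⟩
            exact Finset.mem_coe.mpr (Finset.mem_filter.mpr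
              ⟨(Set.Finite.mem_toFinset _).mpr hx, h⟩)
          · intro hx
            have hx' := Finset.mem_filter.mp (Finset.mem_coe.mp hx)
            exact ⟨(Set.Finite.mem_toFinset _).mp hx'.1, hx'.2⟩
        rw [hcoe, Set.ncard_coe_finset] at hcup
        omega
      omega
    have hdouble : ∑ g ∈ Ffin, (Sfin.filter (fun s => g s = 0)).card
        = ∑ s ∈ Sfin, (Ffin.filter (fun g => g s = 0)).card := by
      simp_rw [Finset.card_filter]
      exact Finset.sum_comm
    have hmcard : Sfin.card = U.ncard + V.ncard := by
      have hUVdisj : Disjoint U V := Set.disjoint_left.mpr (fun {x} hx hy => hUV x hx hy)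
      have hcup := Set.ncard_union_eq hUVdisj (Set.toFinite _) (Set.toFinite _)
      have hfin : Sfin.card = SS.ncard := by
        rw [hSfin, ← Set.ncard_coe_finset, Set.Finite.coe_toFinset]
      rw [hfin, hSS, hcup]
    obtain ⟨f₀, hf₀⟩ := F1 s₀ hs₀ne
    have hf₀ne : f₀ ≠ 0 := by
      intro h
      rw [h] at hf₀
      simp only [LinearMap.zero_apply] at hf₀
      exact (by decide : (0:ZMod 2) ≠ 1) hf₀
    have hf₀mem : f₀ ∈ Ffin := Finset.mem_erase.mpr ⟨hf₀ne, Finset.mem_univ _⟩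
    have hf₀card : 2 ≤ (Sfin.filter (fun s => f₀ s = 0)).card := by
      obtain ⟨u, huU, hu0⟩ := (hsplit f₀ ⟨s₀, hf₀⟩).1
      obtain ⟨v, hvV, hv0⟩ := (hsplit f₀ ⟨s₀, hf₀⟩).2.2.1
      have hne : u ≠ v := fun h => hUV u huU (h ▸ hvV)
      have h1m : u ∈ Sfin.filter (fun s => f₀ s = 0) := by
        rw [Finset.mem_filter]
        exact ⟨(Set.Finite.mem_toFinset _).mpr (Or.inl huU), hu0⟩
      have h2m : v ∈ Sfin.filter (fun s => f₀ s = 0) := by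
        rw [Finset.mem_filter]
        exact ⟨(Set.Finite.mem_toFinset _).mpr (Or.inr hvV), hv0⟩
      exact Finset.one_lt_card.mpr ⟨u, h1m, v, h2m, hne⟩
    have hN8 : 8 ≤ N := by
      have := hperf f₀ hf₀mem
      omega
    have hsum1 : 4 * (∑ g ∈ Ffin, (Sfin.filter (fun s => g s = 0)).card) ≤ Ffin.card * N := by
      calc 4 * (∑ g ∈ Ffin, (Sfin.filter (fun s => g s = 0)).card)
          = ∑ g ∈ Ffin, 4 * (Sfin.filter (fun s => g s = 0)).card := by
            rw [Finset.mul_sum]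
        _ ≤ ∑ _g ∈ Ffin, N := Finset.sum_le_sum hperf
        _ = Ffin.card * N := by rw [Finset.sum_const, smul_eq_mul]
    have hsum2 : 2 * (∑ s ∈ Sfin, ((Ffin.filter (fun g => g s = 0)).card + 1))
        = Sfin.card * N := by
      calc 2 * (∑ s ∈ Sfin, ((Ffin.filter (fun g => g s = 0)).card + 1))
          = ∑ s ∈ Sfin, 2 * ((Ffin.filter (fun g => g s = 0)).card + 1) := by
            rw [Finset.mul_sum]
        _ = ∑ _s ∈ Sfin, N := Finset.sum_congr rfl hpers
        _ = Sfin.card * N := by rw [Finset.sum_const, smul_eq_mul]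
    have hFcard : Ffin.card + 1 = N := by
      rw [hFfin, Finset.card_erase_of_mem (Finset.mem_univ _), Finset.card_univ, hcardΦ]
      omega
    -- final arithmetic
    have hs₀mem : s₀ ∈ Sfin := (Set.Finite.mem_toFinset _).mpr (Or.inl hs₀U)
    have hNeven : ∃ k, N = 2 * k := ⟨(Ffin.filter (fun g => g s₀ = 0)).card + 1,
      (hpers s₀ hs₀mem).symm⟩
    obtain ⟨k, hk⟩ := hNeven
    set T := ∑ g ∈ Ffin, (Sfin.filter (fun s => g s = 0)).card with hT
    have hsum2' : 2 * T + 2 * Sfin.card = Sfin.card * N := by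
      have hdistrib : ∑ s ∈ Sfin, ((Ffin.filter (fun g => g s = 0)).card + 1)
          = (∑ s ∈ Sfin, (Ffin.filter (fun g => g s = 0)).card) + Sfin.card := by
        rw [Finset.sum_add_distrib, Finset.sum_const, smul_eq_mul, mul_one]
      rw [hdouble]
      omega
    rw [← hmcard]
    set m := Sfin.card with hm'
    -- have: 2T + 2m = m * N, 4T ≤ F * N, F + 1 = N, N = 2k, 8 ≤ N. goal: 2m ≤ N
    by_contra hcon
    push_neg at hcon
    have hmk : k + 1 ≤ m := by omega
    obtain ⟨j, rfl⟩ : ∃ j, k = j + 1 := ⟨k - 1, by omega⟩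
    have hj3 : 3 ≤ j := by omega
    have hmj : (j + 2) * j ≤ m * j := Nat.mul_le_mul_right j (by omega)
    have c5 : (j + 2) * j = j * j + 2 * j := by ring
    rw [c5] at hmj
    have c1 : 2 * T + 2 * m = m * N := hsum2'
    have c2 : m * N = 2 * (m * j) + 2 * m := by rw [hk]; ring
    rw [c2] at c1
    have hTval : T = m * j := by omega
    have c3 : Ffin.card * N = 4 * (j * j) + 6 * j + 2 := by
      have hF : Ffin.card = 2 * j + 1 := by omega
      rw [hF, hk]; ring
    rw [c3, hTval] at hsum1
    -- 4 * (m*j) ≤ 4*(j*j) + 6*j + 2  and  j*j + 2*j ≤ m*j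
    have hfin1 : 4 * (j * j) + 8 * j ≤ 4 * (m * j) := by omega
    omega
  · -- some functional has a contained side
    obtain ⟨f, hf⟩ := not_forall.mp hsplit
    have hf1 : ∃ x : H, f x = 1 := by
      by_contra hno
      exact hf (fun h1 => absurd h1 hno)
    have hfail : ¬((∃ u ∈ U, f u = 0) ∧ (∃ u ∈ U, f u = 1) ∧
        (∃ v ∈ V, f v = 0) ∧ (∃ v ∈ V, f v = 1)) := fun hc => hf (fun _ => hc)
    have main_half : ∀ (X Y : Set H), X.Nonempty → Y.Nonempty → (0:H) ∉ X → (0:H) ∉ Y →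
        (∀ x, x ∈ X → x ∈ Y → False) →
        (∀ u ∈ X, ∀ v ∈ Y, u + v ∉ X ∧ u + v ∉ Y) →
        X.ncard + Y.ncard = U.ncard + V.ncard →
        ((∀ v ∈ Y, f v = 0) ∨ (∀ v ∈ Y, f v = 1)) →
        2 * (U.ncard + V.ncard) ≤ N := by
      intro X Y hXne hYne h0X h0Y hXY havd htot hcase
      rw [← htot]
      set P1 : Set H := {x : H | f x = 1} with hP1
      have hP1card : 2 * P1.ncard = N := by
        rw [← hN]
        exact level_card h2 f.toAddMonoidHom hf1 1
      have fit2 : ∀ (Z W : Set H), Z ⊆ P1 → W ⊆ P1 → (∀ x, x ∈ Z → x ∈ W → False) →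
          2 * (Z.ncard + W.ncard) ≤ N := by
        intro Z W hZ hW hZW
        have hdisj : Disjoint Z W := Set.disjoint_left.mpr (fun {x} hx hy => hZW x hx hy)
        have hcup := Set.ncard_union_eq hdisj (Set.toFinite _) (Set.toFinite _)
        have hle := Set.ncard_le_ncard (Set.union_subset hZ hW) (Set.toFinite _)
        omega
      have fit3 : ∀ (Z W T' : Set H), Z ⊆ P1 → W ⊆ P1 → T' ⊆ P1 →
          (∀ x, x ∈ Z → x ∈ W → False) → (∀ x, x ∈ Z → x ∈ T' → False) →
          (∀ x, x ∈ W → x ∈ T' → False) →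
          2 * (Z.ncard + W.ncard + T'.ncard) ≤ N := by
        intro Z W T' hZ hW hT hZW hZT hWT
        have hdisj1 : Disjoint Z W := Set.disjoint_left.mpr (fun {x} hx hy => hZW x hx hy)
        have hdisj2 : Disjoint (Z ∪ W) T' := by
          rw [Set.disjoint_left]
          rintro x (hx | hx) hy
          · exact hZT x hx hy
          · exact hWT x hx hy
        have hcup1 := Set.ncard_union_eq hdisj1 (Set.toFinite _) (Set.toFinite _)
        have hcup2 := Set.ncard_union_eq hdisj2 (Set.toFinite _) (Set.toFinite _)
        have hle := Set.ncard_le_ncard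
          (Set.union_subset (Set.union_subset hZ hW) hT) (Set.toFinite _)
        omega
      have himgcard : ∀ (Z : Set H) (t : H), ((fun x => x + t) '' Z).ncard = Z.ncard :=
        fun Z t => Set.ncard_image_of_injective _ (add_left_injective t)
      rcases hcase with hY0 | hY1
      · by_cases hX0 : ∀ x ∈ X, f x = 0
        · have := subcall f X Y hX0 hY0 hXne hYne h0X h0Y hXY havd hf1
          omega
        · push_neg at hX0
          obtain ⟨x₁, hx₁X, hx₁⟩ := hX0
          have hx₁1 : f x₁ = 1 := by
            rcases z2 (f x₁) with h | h
            · exact absurd h hx₁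
            · exact h
          obtain ⟨v₀, hv₀⟩ := hYne
          by_cases hX0' : ∃ x ∈ X, f x = 0
          · obtain ⟨x₂, hx₂X, hx₂0⟩ := hX0'
            set X₀ : Set H := {x ∈ X | f x = 0} with hX₀
            set X₁ : Set H := {x ∈ X | f x = 1} with hX₁def
            have hXsplit : X₀ ∪ X₁ = X := by
              ext x
              constructor
              · rintro (⟨hx, _⟩ | ⟨hx, _⟩) <;> exact hx
              · intro hx
                rcases z2 (f x) with h | h
                · exact Or.inl ⟨hx, h⟩
                · exact Or.inr ⟨hx, h⟩
            have hXdisj : Disjoint X₀ X₁ := by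
              rw [Set.disjoint_left]
              rintro x ⟨_, h0⟩ ⟨_, h1⟩
              rw [h0] at h1
              exact (by decide : (0:ZMod 2) ≠ 1) h1
            have hXcard : X₀.ncard + X₁.ncard = X.ncard := by
              rw [← Set.ncard_union_eq hXdisj (Set.toFinite _) (Set.toFinite _), hXsplit]
            have hb1 := subcall f X₀ Y (fun x hx => hx.2) hY0 ⟨x₂, hx₂X, hx₂0⟩
              ⟨v₀, hv₀⟩ (fun h0 => h0X h0.1) h0Y (fun x hx hy => hXY x hx.1 hy)
              (fun u hu v hv => ⟨fun hc => (havd u hu.1 v hv).1 hc.1,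
                fun hc => (havd u hu.1 v hv).2 hc⟩) hf1
            have himg : ((fun x => x + v₀) '' X₁) ⊆ P1 := by
              rintro _ ⟨x, hx, rfl⟩
              show f (x + v₀) = 1
              rw [map_add, hx.2, hY0 v₀ hv₀, add_zero]
            have hX₁P : X₁ ⊆ P1 := fun x hx => hx.2
            have hdisjb : ∀ x, x ∈ X₁ → x ∈ ((fun x => x + v₀) '' X₁) → False := by
              rintro x hx ⟨u, hu, rfl⟩
              exact (havd u hu.1 v₀ hv₀).1 hx.1
            have hb2 := fit2 X₁ _ hX₁P himg hdisjb
            rw [himgcard] at hb2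
            omega
          · push_neg at hX0'
            have hXP : X ⊆ P1 := by
              intro x hx
              rcases z2 (f x) with h | h
              · exact absurd h (hX0' x hx)
              · exact h
            obtain ⟨x₀, hx₀⟩ := hXne
            have himg : ((fun y => y + x₀) '' Y) ⊆ P1 := by
              rintro _ ⟨y, hy, rfl⟩
              show f (y + x₀) = 1
              have : f x₀ = 1 := hXP hx₀
              rw [map_add, hY0 y hy, this, zero_add]
            have hdisjc : ∀ z, z ∈ X → z ∈ ((fun y => y + x₀) '' Y) → False := by
              rintro z hz ⟨y, hy, rfl⟩
              have hxy := (havd x₀ hx₀ y hy).1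
              rw [add_comm] at hxy
              exact hxy hz
            have hcc := fit2 X _ hXP himg hdisjc
            rw [himgcard] at hcc
            omega
      · obtain ⟨y₀, hy₀⟩ := hYne
        have hYP : Y ⊆ P1 := fun y hy => hY1 y hy
        by_cases hX1 : ∀ x ∈ X, f x = 1
        · have := fit2 X Y (fun x hx => hX1 x hx) hYP hXY
          omega
        by_cases hX0 : ∀ x ∈ X, f x = 0
        · have himg : ((fun x => x + y₀) '' X) ⊆ P1 := by
            rintro _ ⟨x, hx, rfl⟩
            show f (x + y₀) = 1
            rw [map_add, hX0 x hx, hY1 y₀ hy₀, zero_add]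
          have hdisje : ∀ z, z ∈ ((fun x => x + y₀) '' X) → z ∈ Y → False := by
            rintro _ ⟨x, hx, rfl⟩ hz
            exact (havd x hx y₀ hy₀).2 hz
          have hcc := fit2 _ Y himg hYP hdisje
          rw [himgcard] at hcc
          omega
        · set X₀ : Set H := {x ∈ X | f x = 0} with hX₀
          set X₁ : Set H := {x ∈ X | f x = 1} with hX₁def
          have hXsplit : X₀ ∪ X₁ = X := by
            ext x
            constructor
            · rintro (⟨hx, _⟩ | ⟨hx, _⟩) <;> exact hx
            · intro hx
              rcases z2 (f x) with h | h
              · exact Or.inl ⟨hx, h⟩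
              · exact Or.inr ⟨hx, h⟩
          have hXdisj : Disjoint X₀ X₁ := by
            rw [Set.disjoint_left]
            rintro x ⟨_, h0⟩ ⟨_, h1⟩
            rw [h0] at h1
            exact (by decide : (0:ZMod 2) ≠ 1) h1
          have hXcard : X₀.ncard + X₁.ncard = X.ncard := by
            rw [← Set.ncard_union_eq hXdisj (Set.toFinite _) (Set.toFinite _), hXsplit]
          have himg : ((fun x => x + y₀) '' X₀) ⊆ P1 := by
            rintro _ ⟨x, hx, rfl⟩
            show f (x + y₀) = 1
            rw [map_add, hx.2, hY1 y₀ hy₀, zero_add]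
          have hX₁P : X₁ ⊆ P1 := fun x hx => hx.2
          have d1 : ∀ x, x ∈ ((fun x => x + y₀) '' X₀) → x ∈ X₁ → False := by
            rintro _ ⟨u, hu, rfl⟩ hz
            exact (havd u hu.1 y₀ hy₀).1 hz.1
          have d2 : ∀ x, x ∈ ((fun x => x + y₀) '' X₀) → x ∈ Y → False := by
            rintro _ ⟨u, hu, rfl⟩ hz
            exact (havd u hu.1 y₀ hy₀).2 hz
          have d3 : ∀ x, x ∈ X₁ → x ∈ Y → False := fun x hx hy => hXY x hx.1 hy
          have hcc := fit3 _ X₁ Y himg hX₁P hYP d1 d2 d3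
          rw [himgcard] at hcc
          omega
    by_cases c1 : ∀ v ∈ V, f v = 0
    · exact main_half U V hUne hVne h0U h0V hUV havoid rfl (Or.inl c1)
    by_cases c2 : ∀ v ∈ V, f v = 1
    · exact main_half U V hUne hVne h0U h0V hUV havoid rfl (Or.inr c2)
    by_cases c3 : ∀ u ∈ U, f u = 0
    · exact main_half V U hVne hUne h0V h0U (fun x hx hy => hUV x hy hx)
        (fun v hv u hu => by
          rw [add_comm]
          exact ⟨(havoid u hu v hv).2, (havoid u hu v hv).1⟩)
        (by omega) (Or.inl c3)
    by_cases c4 : ∀ u ∈ U, f u = 1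
    · exact main_half V U hVne hUne h0V h0U (fun x hx hy => hUV x hy hx)
        (fun v hv u hu => by
          rw [add_comm]
          exact ⟨(havoid u hu v hv).2, (havoid u hu v hv).1⟩)
        (by omega) (Or.inr c4)
    · exfalso
      push_neg at c1 c2 c3 c4
      obtain ⟨va, hva, hva'⟩ := c1
      obtain ⟨vb, hvb, hvb'⟩ := c2
      obtain ⟨ua, hua, hua'⟩ := c3
      obtain ⟨ub, hub, hub'⟩ := c4
      refine hfail ⟨⟨ub, hub, ?_⟩, ⟨ua, hua, ?_⟩, ⟨vb, hvb, ?_⟩, ⟨va, hva, ?_⟩⟩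
      · rcases z2 (f ub) with h | h
        · exact h
        · exact absurd h hub'
      · rcases z2 (f ua) with h | h
        · exact absurd h hua'
        · exact h
      · rcases z2 (f vb) with h | h
        · exact h
        · exact absurd h hvb'
      · rcases z2 (f va) with h | h
        · exact absurd h hva'
        · exact h


/-! ### assembling the two-star configuration -/

lemma final_assembly {G : Type} [AddCommGroup G] [Fintype G] (h2 : ∀ x : G, x + x = 0)
    (A : Set G) (α γ β₀ δ₀ : G)
    (hαγ : α ≠ γ) (hαA : α ∈ A) (hγA : γ ∈ A)
    (hβA : β₀ ∈ A) (hβα : β₀ ≠ α) (hβγ : β₀ ≠ γ)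
    (hδA : δ₀ ∈ A) (hδα : δ₀ ≠ α) (hδγ : δ₀ ≠ γ)
    (hβδ : β₀ ≠ δ₀)
    (hβadj : α + β₀ ∈ urep A) (hδadj : γ + δ₀ ∈ urep A)
    (hcover : ∀ s ∈ A, s ≠ α → s ≠ γ → (α + s ∈ urep A) ∨ (γ + s ∈ urep A)) :
    4 * A.ncard ≤ Fintype.card G + 8 := by
  classical
  set S : Set G := A \ {α, γ} with hS
  have hSmem : ∀ s, s ∈ S ↔ s ∈ A ∧ s ≠ α ∧ s ≠ γ := by
    intro s
    simp only [hS, Set.mem_diff, Set.mem_insert_iff, Set.mem_singleton_iff]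
    tauto
  set L₁ : Set G := {s | s ∈ S ∧ α + s ∈ urep A ∧ s ≠ δ₀} with hL₁def
  set L₂ : Set G := S \ L₁ with hL₂def
  have hL₁S : ∀ s ∈ L₁, s ∈ S := fun s hs => hs.1
  have hL₂S : ∀ s ∈ L₂, s ∈ S := fun s hs => hs.1
  have hSA : ∀ s ∈ S, s ∈ A := fun s hs => ((hSmem s).mp hs).1
  have hSα : ∀ s ∈ S, s ≠ α := fun s hs => ((hSmem s).mp hs).2.1
  have hSγ : ∀ s ∈ S, s ≠ γ := fun s hs => ((hSmem s).mp hs).2.2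
  have hL₁adj : ∀ s ∈ L₁, α + s ∈ urep A := fun s hs => hs.2.1
  have hL₂adj : ∀ s ∈ L₂, γ + s ∈ urep A := by
    intro s hs
    by_cases hsδ : s = δ₀
    · rw [hsδ]; exact hδadj
    · have hsS := hs.1
      have hα : ¬(α + s ∈ urep A) := by
        intro hcon
        exact hs.2 ⟨hsS, hcon, hsδ⟩
      rcases hcover s (hSA s hsS) (hSα s hsS) (hSγ s hsS) with h | h
      · exact absurd h hα
      · exact h
  have hβL₁ : β₀ ∈ L₁ := ⟨(hSmem β₀).mpr ⟨hβA, hβα, hβγ⟩, hβadj, hβδ⟩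
  have hδL₂ : δ₀ ∈ L₂ := by
    refine ⟨(hSmem δ₀).mpr ⟨hδA, hδα, hδγ⟩, ?_⟩
    intro hcon
    exact hcon.2.2 rfl
  have hSadj : ∀ s ∈ S, (α + s ∈ urep A) ∨ (γ + s ∈ urep A) := fun s hs =>
    hcover s (hSA s hs) (hSα s hs) (hSγ s hs)
  -- if s ∈ S then α + γ + s ∉ S
  have hp1 : ∀ s ∈ S, α + γ + s ∉ S := by
    intro s hs hcon
    rcases hSadj s hs with h | h
    · have hrep : γ + (α + γ + s) = α + s := by
        have e : γ + (α + γ + s) = (α + s) + (γ + γ) := by abel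
        rw [e, h2, add_zero]
      rcases urep_unique h hαA (hSA s hs) hγA (hSA _ hcon) rfl hrep with ⟨h1, _⟩ | ⟨h1, _⟩
      · exact hαγ h1.symm
      · exact hSγ s hs h1.symm
    · have hrep : α + (α + γ + s) = γ + s := by
        have e : α + (α + γ + s) = (γ + s) + (α + α) := by abel
        rw [e, h2, add_zero]
      rcases urep_unique h hγA (hSA s hs) hαA (hSA _ hcon) rfl hrep with ⟨h1, _⟩ | ⟨h1, _⟩
      · exact hαγ h1
      · exact hSα s hs h1.symm
  have hp2 : ∀ l ∈ L₁, ∀ s ∈ S, ∀ t ∈ S, α + l ≠ s + t := by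
    intro l hl s hs t ht hcon
    rcases urep_unique (hL₁adj l hl) hαA (hSA l (hL₁S l hl)) (hSA s hs) (hSA t ht) rfl
        hcon.symm with ⟨h1, _⟩ | ⟨_, h1⟩
    · exact hSα s hs h1
    · exact hSα t ht h1
  have hp3 : ∀ l ∈ L₂, ∀ s ∈ S, ∀ t ∈ S, γ + l ≠ s + t := by
    intro l hl s hs t ht hcon
    rcases urep_unique (hL₂adj l hl) hγA (hSA l (hL₂S l hl)) (hSA s hs) (hSA t ht) rfl
        hcon.symm with ⟨h1, _⟩ | ⟨_, h1⟩
    · exact hSγ s hs h1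
    · exact hSγ t ht h1
  have hmix : ∀ {l l' : G}, l ∈ S → l' ∈ S → α + l ≠ γ + l' := by
    intro l l' hlS hl'S hcon
    have h1 : γ + (α + l) = γ + (γ + l') := by rw [hcon]
    rw [← add_assoc γ γ l', h2, zero_add] at h1
    have h3 : α + γ + l = l' := by rw [← h1]; abel
    exact hp1 l hlS (h3 ▸ hl'S)
  set U : Set G := ((fun x => α + x) '' L₁) ∪ ((fun x => γ + x) '' L₁) with hU
  set V : Set G := ((fun x => α + x) '' L₂) ∪ ((fun x => γ + x) '' L₂) with hV
  have h0U : (0:G) ∉ U := by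
    rintro (⟨l, hl, heq⟩ | ⟨l, hl, heq⟩)
    · exact hSα l (hL₁S l hl) (eq_of_add_eq_zero'' h2 heq)
    · exact hSγ l (hL₁S l hl) (eq_of_add_eq_zero'' h2 heq)
  have h0V : (0:G) ∉ V := by
    rintro (⟨l, hl, heq⟩ | ⟨l, hl, heq⟩)
    · exact hSα l (hL₂S l hl) (eq_of_add_eq_zero'' h2 heq)
    · exact hSγ l (hL₂S l hl) (eq_of_add_eq_zero'' h2 heq)
  have hUVdisj : ∀ x, x ∈ U → x ∈ V → False := by
    rintro x (⟨l, hl, rfl⟩ | ⟨l, hl, rfl⟩) (⟨l', hl', heq⟩ | ⟨l', hl', heq⟩)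
    · have : l' = l := add_left_cancel heq
      exact hl'.2 (this ▸ hl)
    · exact hmix (hL₁S l hl) (hL₂S l' hl') heq.symm
    · exact hmix (hL₂S l' hl') (hL₁S l hl) heq
    · have : l' = l := add_left_cancel heq
      exact hl'.2 (this ▸ hl)
  have hUne : U.Nonempty := ⟨α + β₀, Or.inl ⟨β₀, hβL₁, rfl⟩⟩
  have hVne : V.Nonempty := ⟨α + δ₀, Or.inl ⟨δ₀, hδL₂, rfl⟩⟩
  -- key facts about sums
  have key1 : ∀ l₁ ∈ L₁, ∀ l₂ ∈ L₂, ∀ s ∈ S, l₁ + l₂ ≠ α + s := by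
    intro l₁ h₁ l₂ h₂ s hs hcon
    have h' := swap_sum h2 hcon
    rw [add_comm l₁ α] at h'
    exact hp2 l₁ h₁ s hs l₂ (hL₂S l₂ h₂) h'
  have key2 : ∀ l₁ ∈ L₁, ∀ l₂ ∈ L₂, ∀ s ∈ S, l₁ + l₂ ≠ γ + s := by
    intro l₁ h₁ l₂ h₂ s hs hcon
    rw [add_comm l₁ l₂] at hcon
    have h' := swap_sum h2 hcon
    rw [add_comm l₂ γ] at h'
    exact hp3 l₂ h₂ s hs l₁ (hL₁S l₁ h₁) h'
  have key3 : ∀ l₁ ∈ L₁, ∀ l₂ ∈ L₂, ∀ s ∈ S, α + γ + (l₁ + l₂) ≠ α + s := by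
    intro l₁ h₁ l₂ h₂ s hs hcon
    apply key2 l₁ h₁ l₂ h₂ s hs
    have h' : γ + (l₁ + l₂) = s := by
      apply add_left_cancel (a := α)
      rw [← add_assoc]
      exact hcon
    rw [← h', ← add_assoc, h2, zero_add]
  have key4 : ∀ l₁ ∈ L₁, ∀ l₂ ∈ L₂, ∀ s ∈ S, α + γ + (l₁ + l₂) ≠ γ + s := by
    intro l₁ h₁ l₂ h₂ s hs hcon
    apply key1 l₁ h₁ l₂ h₂ s hs
    have h' : α + (l₁ + l₂) = s := by
      apply add_left_cancel (a := γ)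
      rw [← add_assoc]
      have e : γ + α + (l₁ + l₂) = α + γ + (l₁ + l₂) := by abel
      rw [e]
      exact hcon
    rw [← h', ← add_assoc, h2, zero_add]
  have hsum_mem : ∀ x, x ∈ U ∨ x ∈ V → (∃ s ∈ S, α + s = x) ∨ (∃ s ∈ S, γ + s = x) := by
    intro x hx
    rcases hx with (⟨l, hl, h⟩ | ⟨l, hl, h⟩) | (⟨l, hl, h⟩ | ⟨l, hl, h⟩)
    · exact Or.inl ⟨l, hL₁S l hl, h⟩
    · exact Or.inr ⟨l, hL₁S l hl, h⟩
    · exact Or.inl ⟨l, hL₂S l hl, h⟩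
    · exact Or.inr ⟨l, hL₂S l hl, h⟩
  have havoid : ∀ u ∈ U, ∀ v ∈ V, u + v ∉ U ∧ u + v ∉ V := by
    have main : ∀ u ∈ U, ∀ v ∈ V, ∀ w, (w ∈ U ∨ w ∈ V) → u + v ≠ w := by
      intro u hu v hv w hmemw heqw
      rcases hu with ⟨l₁, hl₁, hueq⟩ | ⟨l₁, hl₁, hueq⟩ <;>
        rcases hv with ⟨l₂, hl₂, hveq⟩ | ⟨l₂, hl₂, hveq⟩ <;>
        rcases hsum_mem w hmemw with ⟨s, hs, hseq⟩ | ⟨s, hs, hseq⟩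
      · have e1 : α + l₁ = u := hueq
        have e2 : α + l₂ = v := hveq
        refine key1 l₁ hl₁ l₂ hl₂ s hs ?_
        rw [hseq, ← heqw, ← e1, ← e2,
          (by abel : (α + l₁) + (α + l₂) = (l₁ + l₂) + (α + α)), h2, add_zero]
      · have e1 : α + l₁ = u := hueq
        have e2 : α + l₂ = v := hveq
        refine key2 l₁ hl₁ l₂ hl₂ s hs ?_
        rw [hseq, ← heqw, ← e1, ← e2,
          (by abel : (α + l₁) + (α + l₂) = (l₁ + l₂) + (α + α)), h2, add_zero]
      · have e1 : α + l₁ = u := hueq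
        have e2 : γ + l₂ = v := hveq
        refine key3 l₁ hl₁ l₂ hl₂ s hs ?_
        rw [hseq, ← heqw, ← e1, ← e2]
        abel
      · have e1 : α + l₁ = u := hueq
        have e2 : γ + l₂ = v := hveq
        refine key4 l₁ hl₁ l₂ hl₂ s hs ?_
        rw [hseq, ← heqw, ← e1, ← e2]
        abel
      · have e1 : γ + l₁ = u := hueq
        have e2 : α + l₂ = v := hveq
        refine key3 l₁ hl₁ l₂ hl₂ s hs ?_
        rw [hseq, ← heqw, ← e1, ← e2]
        abel
      · have e1 : γ + l₁ = u := hueq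
        have e2 : α + l₂ = v := hveq
        refine key4 l₁ hl₁ l₂ hl₂ s hs ?_
        rw [hseq, ← heqw, ← e1, ← e2]
        abel
      · have e1 : γ + l₁ = u := hueq
        have e2 : γ + l₂ = v := hveq
        refine key1 l₁ hl₁ l₂ hl₂ s hs ?_
        rw [hseq, ← heqw, ← e1, ← e2,
          (by abel : (γ + l₁) + (γ + l₂) = (l₁ + l₂) + (γ + γ)), h2, add_zero]
      · have e1 : γ + l₁ = u := hueq
        have e2 : γ + l₂ = v := hveq
        refine key2 l₁ hl₁ l₂ hl₂ s hs ?_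
        rw [hseq, ← heqw, ← e1, ← e2,
          (by abel : (γ + l₁) + (γ + l₂) = (l₁ + l₂) + (γ + γ)), h2, add_zero]
    intro u hu v hv
    exact ⟨fun hmem => main u hu v hv _ (Or.inl hmem) rfl,
      fun hmem => main u hu v hv _ (Or.inr hmem) rfl⟩
  -- cardinalities
  have hdisjU : Disjoint ((fun x => α + x) '' L₁) ((fun x => γ + x) '' L₁) := by
    rw [Set.disjoint_left]
    rintro x ⟨l, hl, rfl⟩ ⟨l', hl', heq⟩
    exact hmix (hL₁S l hl) (hL₁S l' hl') heq.symm
  have hdisjV : Disjoint ((fun x => α + x) '' L₂) ((fun x => γ + x) '' L₂) := by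
    rw [Set.disjoint_left]
    rintro x ⟨l, hl, rfl⟩ ⟨l', hl', heq⟩
    exact hmix (hL₂S l hl) (hL₂S l' hl') heq.symm
  have hUcard : U.ncard = 2 * L₁.ncard := by
    rw [hU, Set.ncard_union_eq hdisjU (Set.toFinite _) (Set.toFinite _),
      Set.ncard_image_of_injective _ (add_right_injective α),
      Set.ncard_image_of_injective _ (add_right_injective γ)]
    ring
  have hVcard : V.ncard = 2 * L₂.ncard := by
    rw [hV, Set.ncard_union_eq hdisjV (Set.toFinite _) (Set.toFinite _),
      Set.ncard_image_of_injective _ (add_right_injective α),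
      Set.ncard_image_of_injective _ (add_right_injective γ)]
    ring
  have hLdisj : Disjoint L₁ L₂ := by
    rw [Set.disjoint_left]
    intro x h1 h2'
    exact h2'.2 h1
  have hLunion : L₁ ∪ L₂ = S := by
    ext x
    constructor
    · rintro (h | h)
      · exact hL₁S x h
      · exact hL₂S x h
    · intro hx
      by_cases hxL : x ∈ L₁
      · exact Or.inl hxL
      · exact Or.inr ⟨hx, hxL⟩
  have hLsplit : L₁.ncard + L₂.ncard = S.ncard := by
    rw [← Set.ncard_union_eq hLdisj (Set.toFinite _) (Set.toFinite _), hLunion]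
  have hpairsub : ({α, γ} : Set G) ⊆ A := by
    rintro x (rfl | rfl)
    · exact hαA
    · exact hγA
  have hScard : S.ncard + 2 = A.ncard := by
    have hdiff := Set.ncard_diff hpairsub (Set.toFinite _)
    have hpair : ({α, γ} : Set G).ncard = 2 := Set.ncard_pair hαγ
    have hle : ({α, γ} : Set G).ncard ≤ A.ncard := Set.ncard_le_ncard hpairsub (Set.toFinite _)
    rw [← hS] at hdiff
    omega
  have hcore := core (Fintype.card G) G h2 rfl U V hUne hVne h0U h0V hUVdisj havoid
  omega


/-! ### small graph helpers -/

lemma pair_disj {V' : Type*} {x y u v : V'} (h1 : x ≠ u) (h2' : x ≠ v) (h3 : y ≠ u)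
    (h4 : y ≠ v) : ∀ z, z ∈ s(x, y) → z ∉ s(u, v) := by
  intro z hz hz'
  rw [Sym2.mem_iff] at hz hz'
  rcases hz with rfl | rfl <;> rcases hz' with rfl | rfl <;> simp_all

lemma sym2_exists {V' : Type*} (e : Sym2 V') : ∃ x y, e = s(x, y) := by
  induction e using Sym2.ind with
  | _ x y => exact ⟨x, y, rfl⟩

lemma exists_neighbor {G : Type*} [AddCommGroup G] (h2 : ∀ x : G, x + x = 0) {A : Set G}
    (hround : ∀ B : Set G, B ⊂ A → B + B ≠ A + A) (hA : 1 < A.ncard)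
    {a : G} (ha : a ∈ A) : ∃ b ∈ A, b ≠ a ∧ a + b ∈ urep A := by
  have hB : A \ {a} ⊂ A := Set.sdiff_singleton_ssubset.mpr ha
  have hne := hround _ hB
  have hsub : (A \ {a}) + (A \ {a}) ⊆ A + A :=
    Set.add_subset_add Set.diff_subset Set.diff_subset
  have hss : (A \ {a}) + (A \ {a}) ⊂ A + A :=
    ⟨hsub, fun h => hne (Set.Subset.antisymm hsub h)⟩
  obtain ⟨d, hdA, hdB⟩ := Set.exists_of_ssubset hss
  obtain ⟨b₀, hb₀, hb₀a⟩ := Set.exists_ne_of_one_lt_ncard hA a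
  have hall : ∀ z w, z ∈ A → w ∈ A → z + w = d → z = a ∨ w = a := by
    intro z w hz hw hzw
    by_contra hcon
    push_neg at hcon
    exact hdB (Set.mem_add.mpr ⟨z, ⟨hz, fun h => hcon.1 (Set.mem_singleton_iff.mp h)⟩,
      w, ⟨hw, fun h => hcon.2 (Set.mem_singleton_iff.mp h)⟩, hzw⟩)
  have hd0 : d ≠ 0 := by
    rintro rfl
    exact hdB (Set.mem_add.mpr ⟨b₀, ⟨hb₀, fun h => hb₀a (Set.mem_singleton_iff.mp h)⟩,
      b₀, ⟨hb₀, fun h => hb₀a (Set.mem_singleton_iff.mp h)⟩, h2 b₀⟩)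
  obtain ⟨x, hx, y, hy, hxy⟩ := Set.mem_add.mp hdA
  have build : ∀ y', y' ∈ A → a + y' = d → ∃ b ∈ A, b ≠ a ∧ a + b ∈ urep A := by
    intro y' hy' hay
    have hy'a : y' ≠ a := by
      rintro rfl
      rw [h2] at hay
      exact hd0 hay.symm
    refine ⟨y', hy', hy'a, ?_⟩
    refine ⟨a, ha, y', hy', rfl, ?_⟩
    intro b₁ hb₁ b₂ hb₂ hbb
    rw [hay] at hbb
    rcases hall b₁ b₂ hb₁ hb₂ hbb with rfl | rfl
    · left
      refine ⟨rfl, ?_⟩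
      have hcc : b₁ + b₂ = b₁ + y' := by rw [hbb, ← hay]
      exact add_left_cancel hcc
    · right
      refine ⟨?_, rfl⟩
      have hcc : b₂ + b₁ = b₂ + y' := by rw [add_comm b₂ b₁, hbb, ← hay]
      exact add_left_cancel hcc
  rcases hall x y hx hy hxy with rfl | rfl
  · exact build y hy hxy
  · exact build x hx (by rw [add_comm]; exact hxy)

end Stmt18Aux

open Stmt18Aux

/-- **Lemma.** Let `r ≥ 1`. If `A ⊆ G = Fin r → ZMod 2` is round with `|A| > 2^(r-2) + 3`
(stated as `4·|A| > 2^r + 12`), then the matching number of `Γ(A)` is not equal to 2. -/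
theorem stmt_18 (r : ℕ) (hr : 1 ≤ r) (A : Set (Fin r → ZMod 2))
    (hround : ∀ B : Set (Fin r → ZMod 2), B ⊂ A → B + B ≠ A + A)
    (hsize : 2 ^ r + 12 < 4 * A.ncard) :
    sSup {n : ℕ | ∃ M : Set (Sym2 (Fin r → ZMod 2)), M ⊆ (gam A).edgeSet ∧
      (∀ e ∈ M, ∀ f ∈ M, e ≠ f → ∀ v, v ∈ e → v ∉ f) ∧ M.ncard = n} ≠ 2 := by
  intro hsup
  classical
  have h2 : ∀ x : Fin r → ZMod 2, x + x = 0 := by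
    intro x
    funext i
    have hz : ∀ z : ZMod 2, z + z = 0 := by decide
    exact hz (x i)
  have hncard4 : 4 ≤ A.ncard := by
    have h1 : (2:ℕ) ≤ 2 ^ r := by
      calc (2:ℕ) = 2 ^ 1 := by norm_num
        _ ≤ 2 ^ r := Nat.pow_le_pow_right (by norm_num) hr
    omega
  set MS : Set ℕ := {n : ℕ | ∃ M : Set (Sym2 (Fin r → ZMod 2)), M ⊆ (gam A).edgeSet ∧
      (∀ e ∈ M, ∀ f ∈ M, e ≠ f → ∀ v, v ∈ e → v ∉ f) ∧ M.ncard = n} with hMS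
  have hbdd : BddAbove MS := by
    refine ⟨Fintype.card (Sym2 (Fin r → ZMod 2)), ?_⟩
    rintro n ⟨M, hM, hdis, rfl⟩
    calc M.ncard ≤ (Set.univ : Set (Sym2 (Fin r → ZMod 2))).ncard :=
          Set.ncard_le_ncard (Set.subset_univ _) (Set.toFinite _)
      _ = _ := by rw [Set.ncard_univ, Nat.card_eq_fintype_card]
  have hnem : MS.Nonempty :=
    ⟨0, ∅, Set.empty_subset _, fun e he => (Set.notMem_empty e he).elim, Set.ncard_empty _⟩
  have h2mem : 2 ∈ MS := by
    rw [← hsup]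
    exact Nat.sSup_mem hnem hbdd
  obtain ⟨M, hME, hMdis, hM2⟩ := h2mem
  obtain ⟨e₁, e₂, he12, hMeq⟩ := Set.ncard_eq_two.mp hM2
  obtain ⟨a, b, hab_eq⟩ := sym2_exists e₁
  obtain ⟨c, d, hcd_eq⟩ := sym2_exists e₂
  subst hab_eq
  subst hcd_eq
  have he₁M : s(a,b) ∈ M := by rw [hMeq]; exact Set.mem_insert _ _
  have he₂M : s(c,d) ∈ M := by rw [hMeq]; exact Set.mem_insert_of_mem _ rfl
  have hab : (gam A).Adj a b := (SimpleGraph.mem_edgeSet _).mp (hME he₁M)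
  have hcd : (gam A).Adj c d := (SimpleGraph.mem_edgeSet _).mp (hME he₂M)
  have hdisj12 := hMdis _ he₁M _ he₂M he12
  have hab_ne : a ≠ b := hab.ne
  have hcd_ne : c ≠ d := hcd.ne
  have hac : a ≠ c := fun h =>
    hdisj12 a (Sym2.mem_mk_left _ _) (by rw [h]; exact Sym2.mem_mk_left _ _)
  have had : a ≠ d := fun h =>
    hdisj12 a (Sym2.mem_mk_left _ _) (by rw [h]; exact Sym2.mem_mk_right _ _)
  have hbc : b ≠ c := fun h =>
    hdisj12 b (Sym2.mem_mk_right _ _) (by rw [h]; exact Sym2.mem_mk_left _ _)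
  have hbd : b ≠ d := fun h =>
    hdisj12 b (Sym2.mem_mk_right _ _) (by rw [h]; exact Sym2.mem_mk_right _ _)
  have hno3 : ∀ x₁ y₁ x₂ y₂ x₃ y₃ : Fin r → ZMod 2,
      (gam A).Adj x₁ y₁ → (gam A).Adj x₂ y₂ → (gam A).Adj x₃ y₃ →
      (∀ v, v ∈ s(x₁,y₁) → v ∉ s(x₂,y₂)) →
      (∀ v, v ∈ s(x₁,y₁) → v ∉ s(x₃,y₃)) →
      (∀ v, v ∈ s(x₂,y₂) → v ∉ s(x₃,y₃)) → False := by
    intro x₁ y₁ x₂ y₂ x₃ y₃ h₁ h₂' h₃ d12 d13 d23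
    have hne12 : s(x₁,y₁) ≠ s(x₂,y₂) := fun h =>
      d12 x₁ (Sym2.mem_mk_left _ _) (h ▸ Sym2.mem_mk_left _ _)
    have hne13 : s(x₁,y₁) ≠ s(x₃,y₃) := fun h =>
      d13 x₁ (Sym2.mem_mk_left _ _) (h ▸ Sym2.mem_mk_left _ _)
    have hne23 : s(x₂,y₂) ≠ s(x₃,y₃) := fun h =>
      d23 x₂ (Sym2.mem_mk_left _ _) (h ▸ Sym2.mem_mk_left _ _)
    have h3mem : 3 ∈ MS := by
      refine ⟨{s(x₁,y₁), s(x₂,y₂), s(x₃,y₃)}, ?_, ?_, ?_⟩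
      · rintro e (rfl | rfl | rfl)
        · exact (SimpleGraph.mem_edgeSet _).mpr h₁
        · exact (SimpleGraph.mem_edgeSet _).mpr h₂'
        · exact (SimpleGraph.mem_edgeSet _).mpr h₃
      · rintro e (rfl | rfl | rfl) f (rfl | rfl | rfl) hef v hv
        · exact absurd rfl hef
        · exact d12 v hv
        · exact d13 v hv
        · exact fun hvf => d12 v hvf hv
        · exact absurd rfl hef
        · exact d23 v hv
        · exact fun hvf => d13 v hvf hv
        · exact fun hvf => d23 v hvf hv
        · exact absurd rfl hef
      · rw [Set.ncard_insert_of_notMem (by simp [hne12, hne13]),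
          Set.ncard_insert_of_notMem (by simp [hne23]), Set.ncard_singleton]
    have h3le := le_csSup hbdd h3mem
    omega
  have hnbr : ∀ v ∈ A, ∃ w ∈ A, w ≠ v ∧ v + w ∈ urep A := fun v hv =>
    exists_neighbor h2 hround (by omega) hv
  have haA : a ∈ A := (gam_adj.mp hab).2.1
  have hbA : b ∈ A := (gam_adj.mp hab).2.2.1
  have hcA : c ∈ A := (gam_adj.mp hcd).2.1
  have hdA : d ∈ A := (gam_adj.mp hcd).2.2.1
  have hout : ∀ v w, (v ≠ a ∧ v ≠ b ∧ v ≠ c ∧ v ≠ d) → (gam A).Adj v w →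
      (w = a ∨ w = b ∨ w = c ∨ w = d) := by
    intro v w hvK hvw
    by_contra hcon
    push_neg at hcon
    obtain ⟨hwa, hwb, hwc, hwd⟩ := hcon
    exact hno3 v w a b c d hvw hab hcd
      (pair_disj hvK.1 hvK.2.1 hwa hwb)
      (pair_disj hvK.2.2.1 hvK.2.2.2 hwc hwd)
      (pair_disj hac had hbc hbd)
  have hsel : ∀ x y z w : Fin r → ZMod 2, (gam A).Adj x y → (gam A).Adj z w →
      x ≠ z → x ≠ w → y ≠ z → y ≠ w →
      ∃ α, (α = x ∨ α = y) ∧ ∀ v, v ∈ A → (v ≠ x ∧ v ≠ y ∧ v ≠ z ∧ v ≠ w) →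
        ((gam A).Adj v x ∨ (gam A).Adj v y) → (gam A).Adj v α := by
    intro x y z w hxy hzw hxz hxw hyz hyw
    by_cases hex : ∃ p, p ∈ A ∧ (p ≠ x ∧ p ≠ y ∧ p ≠ z ∧ p ≠ w) ∧
        (gam A).Adj p y ∧ ¬(gam A).Adj p x
    · obtain ⟨p, hpA, hpK, hpy, hpx⟩ := hex
      refine ⟨y, Or.inr rfl, ?_⟩
      intro v hv hvK hvd
      rcases hvd with hvx | hvy
      · exfalso
        by_cases hvp : v = p
        · rw [hvp] at hvx
          exact hpx hvx
        · exact hno3 v x p y z w hvx hpy hzw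
            (pair_disj hvp hvK.2.1 hpK.1.symm hxy.ne)
            (pair_disj hvK.2.2.1 hvK.2.2.2 hxz hxw)
            (pair_disj hpK.2.2.1 hpK.2.2.2 hyz hyw)
      · exact hvy
    · push_neg at hex
      refine ⟨x, Or.inl rfl, ?_⟩
      intro v hv hvK hvd
      rcases hvd with hvx | hvy
      · exact hvx
      · exact hex v hv hvK hvy
  obtain ⟨α, hαab, hαsel⟩ := hsel a b c d hab hcd hac had hbc hbd
  obtain ⟨γ, hγcd, hγsel⟩ := hsel c d a b hcd hab hac.symm hbc.symm had.symm hbd.symm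
  have hcardG : Fintype.card (Fin r → ZMod 2) = 2 ^ r := by
    rw [Fintype.card_fun, ZMod.card, Fintype.card_fin]
  have adj_to_urep : ∀ {x y : Fin r → ZMod 2}, (gam A).Adj x y → x + y ∈ urep A :=
    fun h => (gam_adj.mp h).2.2.2
  have hfinish : ∀ αx γx βx δx : Fin r → ZMod 2,
      αx ≠ γx → αx ∈ A → γx ∈ A →
      βx ∈ A → βx ≠ αx → βx ≠ γx →
      δx ∈ A → δx ≠ αx → δx ≠ γx →
      βx ≠ δx →
      αx + βx ∈ urep A → γx + δx ∈ urep A →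
      (∀ s ∈ A, s ≠ αx → s ≠ γx → (αx + s ∈ urep A) ∨ (γx + s ∈ urep A)) → False := by
    intro αx γx βx δx u1 u2 u3 u4 u5 u6 u7 u8 u9 u10 u11 u12 u13
    have hle := final_assembly h2 A αx γx βx δx u1 u2 u3 u4 u5 u6 u7 u8 u9 u10 u11 u12 u13
    rw [hcardG] at hle
    omega
  have build_cover : ∀ α' γ' : Fin r → ZMod 2,
      (∀ v, v ∈ A → (v ≠ a ∧ v ≠ b ∧ v ≠ c ∧ v ≠ d) →
        ((gam A).Adj v a ∨ (gam A).Adj v b) → (gam A).Adj v α') →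
      (∀ v, v ∈ A → (v ≠ c ∧ v ≠ d ∧ v ≠ a ∧ v ≠ b) →
        ((gam A).Adj v c ∨ (gam A).Adj v d) → (gam A).Adj v γ') →
      (∀ s', (s' = a ∨ s' = b) → s' ≠ α' → (gam A).Adj α' s') →
      (∀ s', (s' = c ∨ s' = d) → s' ≠ γ' → (gam A).Adj γ' s') →
      ∀ s ∈ A, s ≠ α' → s ≠ γ' → (α' + s ∈ urep A) ∨ (γ' + s ∈ urep A) := by
    intro α' γ' hAsel hGsel hApart hGpart s hsA hsα hsγ
    by_cases hsa : s = a
    · left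
      subst hsa
      exact adj_to_urep (hApart s (Or.inl rfl) hsα)
    by_cases hsb : s = b
    · left
      subst hsb
      exact adj_to_urep (hApart s (Or.inr rfl) hsα)
    by_cases hsc : s = c
    · right
      subst hsc
      exact adj_to_urep (hGpart s (Or.inl rfl) hsγ)
    by_cases hsd : s = d
    · right
      subst hsd
      exact adj_to_urep (hGpart s (Or.inr rfl) hsγ)
    · obtain ⟨w, hwA, hwne, hwurep⟩ := hnbr s hsA
      have hsadjw : (gam A).Adj s w := gam_adj.mpr ⟨fun h => hwne h.symm, hsA, hwA, hwurep⟩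
      have hw4 := hout s w ⟨hsa, hsb, hsc, hsd⟩ hsadjw
      rcases hw4 with rfl | rfl | rfl | rfl
      · have hh := hAsel s hsA ⟨hsa, hsb, hsc, hsd⟩ (Or.inl hsadjw)
        left
        have hu := adj_to_urep hh
        rwa [add_comm] at hu
      · have hh := hAsel s hsA ⟨hsa, hsb, hsc, hsd⟩ (Or.inr hsadjw)
        left
        have hu := adj_to_urep hh
        rwa [add_comm] at hu
      · have hh := hGsel s hsA ⟨hsc, hsd, hsa, hsb⟩ (Or.inl hsadjw)
        right
        have hu := adj_to_urep hh
        rwa [add_comm] at hu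
      · have hh := hGsel s hsA ⟨hsc, hsd, hsa, hsb⟩ (Or.inr hsadjw)
        right
        have hu := adj_to_urep hh
        rwa [add_comm] at hu
  rcases hαab with h1 | h1 <;> obtain rfl := h1.symm <;>
    rcases hγcd with hg | hg <;> obtain rfl := hg.symm
  · exact hfinish a c b d hac haA hcA hbA hab_ne.symm hbc hdA had.symm hcd_ne.symm hbd
      (adj_to_urep hab) (adj_to_urep hcd)
      (build_cover a c hαsel hγsel
        (fun s' hs' hne => by
          rcases hs' with rfl | rfl
          · exact absurd rfl hne
          · exact hab)
        (fun s' hs' hne => by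
          rcases hs' with rfl | rfl
          · exact absurd rfl hne
          · exact hcd))
  · exact hfinish a d b c had haA hdA hbA hab_ne.symm hbd hcA hac.symm hcd_ne hbc
      (adj_to_urep hab) (adj_to_urep hcd.symm)
      (build_cover a d hαsel hγsel
        (fun s' hs' hne => by
          rcases hs' with rfl | rfl
          · exact absurd rfl hne
          · exact hab)
        (fun s' hs' hne => by
          rcases hs' with rfl | rfl
          · exact hcd.symm
          · exact absurd rfl hne))
  · exact hfinish b c a d hbc hbA hcA haA hab_ne hac hdA hbd.symm hcd_ne.symm had
      (adj_to_urep hab.symm) (adj_to_urep hcd)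
      (build_cover b c hαsel hγsel
        (fun s' hs' hne => by
          rcases hs' with rfl | rfl
          · exact hab.symm
          · exact absurd rfl hne)
        (fun s' hs' hne => by
          rcases hs' with rfl | rfl
          · exact absurd rfl hne
          · exact hcd))
  · exact hfinish b d a c hbd hbA hdA haA hab_ne had hcA hbc.symm hcd_ne hac
      (adj_to_urep hab.symm) (adj_to_urep hcd.symm)
      (build_cover b d hαsel hγsel
        (fun s' hs' hne => by
          rcases hs' with rfl | rfl
          · exact hab.symm
          · exact absurd rfl hne)
        (fun s' hs' hne => by
          rcases hs' with rfl | rfl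
          · exact hcd.symm
          · exact absurd rfl hne))
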